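/- Let G be a weighted directed graph on vertex set {1,…,N} with Laplacian L. Then every eigenvalue of L has strictly positive real part except for a simple zero eigenvalue whose corresponding (right) eigenvector is (1,1,…,1)^T, if and only if G has a rooted-out branch. -/

import Mathlib

/-- The Laplacian of the weighted directed graph on `Fin N` with weights `a`:
`L i i = ∑_{k ≠ i} a i k` and `L i j = - a i j` for `i ≠ j`. -/
def graphLaplacian {N : ℕ} (a : Fin N → Fin N → ℝ) : Matrix (Fin N) (Fin N) ℝ :=
  Matrix.of fun i j => if i = j then ∑ k ∈ Finset.univ.erase i, a i k else -(a i j)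

/-- `G` has a rooted-out branch: some vertex has a directed path to every other vertex.
Information flows from `j` to `i` along an edge when `a i j > 0` (i.e. `j` is a neighbor
of `i`), so the step relation from `u` to `v` holds when `a v u > 0`. -/
def hasRootedOutBranch {N : ℕ} (a : Fin N → Fin N → ℝ) : Prop :=
  ∃ r : Fin N, ∀ v : Fin N, Relation.ReflTransGen (fun u v => 0 < a v u) r v

/-! ### Auxiliary lemmas -/

lemma lap_mulVec {N : ℕ} {R : Type*} [CommRing R] (c : Fin N → Fin N → R) (x : Fin N → R)
    (v : Fin N) :
    (Matrix.of fun i j => if i = j then ∑ k ∈ Finset.univ.erase i, c i k else -(c i j)).mulVec x v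
      = ∑ j ∈ Finset.univ.erase v, c v j * (x v - x j) := by
  have h0 : (Matrix.of fun i j => if i = j then ∑ k ∈ Finset.univ.erase i, c i k
      else -(c i j)).mulVec x v
      = ∑ j, (if v = j then ∑ k ∈ Finset.univ.erase v, c v k else -(c v j)) * x j := rfl
  rw [h0, ← Finset.add_sum_erase _ _ (Finset.mem_univ v), if_pos rfl]
  have h1 : ∀ j ∈ Finset.univ.erase v,
      (if v = j then ∑ k ∈ Finset.univ.erase v, c v k else -(c v j)) * x j
      = -(c v j * x j) := by
    intro j hj
    rw [if_neg (fun h => (Finset.mem_erase.mp hj).1 h.symm)]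
    ring
  rw [Finset.sum_congr rfl h1, Finset.sum_mul, ← Finset.sum_add_distrib]
  exact Finset.sum_congr rfl fun j _ => by ring

lemma gl_mulVec {N : ℕ} (a : Fin N → Fin N → ℝ) (x : Fin N → ℝ) (v : Fin N) :
    (graphLaplacian a).mulVec x v = ∑ j ∈ Finset.univ.erase v, a v j * (x v - x j) :=
  lap_mulVec a x v

lemma gl_map (N : ℕ) (a : Fin N → Fin N → ℝ) :
    (graphLaplacian a).map Complex.ofReal
      = Matrix.of fun i j => if i = j then ∑ k ∈ Finset.univ.erase i, ((a i k : ℝ) : ℂ)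
          else -((a i j : ℝ) : ℂ) := by
  ext i j
  simp only [Matrix.map_apply, graphLaplacian, Matrix.of_apply, apply_ite Complex.ofReal]
  push_cast
  rfl

lemma gl_mulVec_one {N : ℕ} (a : Fin N → Fin N → ℝ) :
    (graphLaplacian a).mulVec (fun _ => 1) = 0 := by
  funext v
  rw [gl_mulVec]
  simp

/-- Gershgorin-type estimate: any eigenvalue of the (complexified) Laplacian is zero or has
positive real part. -/
lemma gl_root_re {N : ℕ} (a : Fin N → Fin N → ℝ) (ha : ∀ i j, 0 ≤ a i j) (μ : ℂ)
    (h : ((graphLaplacian a).map Complex.ofReal).charpoly.IsRoot μ) : μ = 0 ∨ 0 < μ.re := by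
  by_cases hμ : μ = 0
  · exact Or.inl hμ
  right
  set M := (graphLaplacian a).map Complex.ofReal with hM
  have hdet : (Matrix.diagonal (fun _ : Fin N => μ) - M).det = 0 := by
    have h1 : M.charpoly.eval μ = 0 := h
    rw [Matrix.charpoly, ← Polynomial.coe_evalRingHom, RingHom.map_det] at h1
    rw [← h1]
    congr 1
    ext i j
    by_cases hij : i = j
    · subst hij; simp [Matrix.charmatrix_apply_eq]
    · simp [Matrix.charmatrix_apply_ne _ _ _ hij, Matrix.diagonal_apply_ne _ hij]
  obtain ⟨x, hx0, hx⟩ := Matrix.exists_mulVec_eq_zero_iff.mpr hdet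
  have hxe : M.mulVec x = μ • x := by
    have h2 := hx
    rw [Matrix.sub_mulVec, sub_eq_zero] at h2
    rw [← h2]
    funext i
    simp [Matrix.mulVec_diagonal]
  obtain ⟨i0, hi0⟩ := Function.ne_iff.mp hx0
  have hne : (Finset.univ : Finset (Fin N)).Nonempty := ⟨i0, Finset.mem_univ i0⟩
  obtain ⟨m, -, hm⟩ := Finset.exists_max_image Finset.univ (fun i => ‖x i‖) hne
  have hxm : 0 < ‖x m‖ := by
    have := hm i0 (Finset.mem_univ i0)
    have h2 : 0 < ‖x i0‖ := norm_pos_iff.mpr (by simpa using hi0)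
    linarith
  set dR : ℝ := ∑ j ∈ Finset.univ.erase m, a m j with hdR
  have hdR0 : 0 ≤ dR := Finset.sum_nonneg fun j _ => ha m j
  have heq : μ * x m = ∑ j ∈ Finset.univ.erase m, ((a m j : ℝ) : ℂ) * (x m - x j) := by
    have h2 := congrFun hxe m
    rw [hM, gl_map] at h2
    rw [lap_mulVec] at h2
    simpa [Pi.smul_apply, smul_eq_mul] using h2.symm
  have heq2 : (μ - (dR : ℂ)) * x m = -∑ j ∈ Finset.univ.erase m, ((a m j : ℝ) : ℂ) * x j := by
    rw [sub_mul, heq, hdR]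
    push_cast
    rw [Finset.sum_mul]
    rw [← Finset.sum_sub_distrib, ← Finset.sum_neg_distrib]
    exact Finset.sum_congr rfl fun j _ => by ring
  have habs : ‖μ - (dR : ℂ)‖ * ‖x m‖ ≤ dR * ‖x m‖ := by
    rw [← norm_mul, heq2, norm_neg]
    calc ‖∑ j ∈ Finset.univ.erase m, ((a m j : ℝ) : ℂ) * x j‖
        ≤ ∑ j ∈ Finset.univ.erase m, ‖((a m j : ℝ) : ℂ) * x j‖ :=
          norm_sum_le _ _
      _ ≤ ∑ j ∈ Finset.univ.erase m, a m j * ‖x m‖ := by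
          refine Finset.sum_le_sum fun j _ => ?_
          rw [norm_mul, Complex.norm_real, Real.norm_of_nonneg (ha m j)]
          exact mul_le_mul_of_nonneg_left (hm j (Finset.mem_univ j)) (ha m j)
      _ = dR * ‖x m‖ := by rw [Finset.sum_mul]
  have habs2 : ‖μ - (dR : ℂ)‖ ≤ dR := le_of_mul_le_mul_right habs hxm
  have hsq : Complex.normSq (μ - (dR : ℂ)) ≤ dR ^ 2 := by
    rw [← Complex.sq_norm]
    exact pow_le_pow_left₀ (norm_nonneg _) habs2 2
  have hnsq : 0 < Complex.normSq μ := Complex.normSq_pos.mpr hμ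
  rw [Complex.normSq_apply] at hnsq
  rw [Complex.normSq_apply, Complex.sub_re, Complex.sub_im, Complex.ofReal_re,
    Complex.ofReal_im] at hsq
  nlinarith [hnsq, hsq, hdR0]

lemma gl_max_step {N : ℕ} (a : Fin N → Fin N → ℝ) (ha : ∀ i j, 0 ≤ a i j) (x : Fin N → ℝ)
    (hx : (graphLaplacian a).mulVec x = 0) (v : Fin N) (hmax : ∀ j, x j ≤ x v)
    (u : Fin N) (hu : 0 < a v u) : x u = x v := by
  by_cases huv : u = v
  · rw [huv]
  have h0 : ∑ j ∈ Finset.univ.erase v, a v j * (x v - x j) = 0 := by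
    rw [← gl_mulVec a x v, hx]; rfl
  have hterm : ∀ j ∈ Finset.univ.erase v, 0 ≤ a v j * (x v - x j) := fun j _ =>
    mul_nonneg (ha v j) (by linarith [hmax j])
  have := (Finset.sum_eq_zero_iff_of_nonneg hterm).mp h0 u
    (Finset.mem_erase.mpr ⟨huv, Finset.mem_univ u⟩)
  rcases mul_eq_zero.mp this with h | h
  · exact absurd h (ne_of_gt hu)
  · linarith [sub_eq_zero.mp h]

lemma gl_ker_const {N : ℕ} (a : Fin N → Fin N → ℝ) (ha : ∀ i j, 0 ≤ a i j) (r : Fin N)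
    (hr : ∀ v : Fin N, Relation.ReflTransGen (fun u v => 0 < a v u) r v)
    (x : Fin N → ℝ) (hx : (graphLaplacian a).mulVec x = 0) : x = fun _ => x r := by
  have key : ∀ y : Fin N → ℝ, (graphLaplacian a).mulVec y = 0 → ∀ v, y v ≤ y r := by
    intro y hy v
    obtain ⟨m, -, hm⟩ := Finset.exists_max_image Finset.univ y ⟨r, Finset.mem_univ r⟩
    have hmax : ∀ j, y j ≤ y m := fun j => hm j (Finset.mem_univ j)
    have hrm : y r = y m := by
      refine Relation.ReflTransGen.head_induction_on (hr m) rfl ?_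
      intro s c hsc hcm ih
      rw [← ih]
      exact gl_max_step a ha y hy c (fun j => ih ▸ hmax j) s hsc
    exact hrm ▸ hmax v
  have h1 := key x hx
  have h2 := key (-x) (by rw [Matrix.mulVec_neg, hx, neg_zero])
  funext v
  have := h2 v
  simp only [Pi.neg_apply, neg_le_neg_iff] at this
  exact le_antisymm (h1 v) this

lemma gl_no_const {N : ℕ} (a : Fin N → Fin N → ℝ) (ha : ∀ i j, 0 ≤ a i j) (hN : 0 < N)
    (x : Fin N → ℝ) (c : ℝ) (hc : c ≠ 0)
    (h : (graphLaplacian a).mulVec x = fun _ => c) : False := by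
  have hne : (Finset.univ : Finset (Fin N)).Nonempty :=
    ⟨⟨0, hN⟩, Finset.mem_univ _⟩
  rcases hc.lt_or_gt with hc' | hc'
  · obtain ⟨m, -, hm⟩ := Finset.exists_max_image Finset.univ x hne
    have := congrFun h m
    rw [gl_mulVec] at this
    have h0 : 0 ≤ ∑ j ∈ Finset.univ.erase m, a m j * (x m - x j) :=
      Finset.sum_nonneg fun j _ =>
        mul_nonneg (ha m j) (by linarith [hm j (Finset.mem_univ j)])
    linarith [this ▸ h0]
  · obtain ⟨m, -, hm⟩ := Finset.exists_min_image Finset.univ x hne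
    have := congrFun h m
    rw [gl_mulVec] at this
    have h0 : ∑ j ∈ Finset.univ.erase m, a m j * (x m - x j) ≤ 0 :=
      Finset.sum_nonpos fun j _ =>
        mul_nonpos_of_nonneg_of_nonpos (ha m j) (by linarith [hm j (Finset.mem_univ j)])
    linarith [this ▸ h0]

/-- Bridge: the multiplicity of the zero root of the complexified characteristic polynomial
equals the dimension of the generalized 0-eigenspace of the real matrix. -/
lemma gl_bridge {N : ℕ} (L : Matrix (Fin N) (Fin N) ℝ) :
    (L.map Complex.ofReal).charpoly.rootMultiplicity 0
      = Module.finrank ℝ (Module.End.maxGenEigenspace L.mulVecLin 0) := by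
  have h1 : L.map Complex.ofReal = L.map Complex.ofRealHom := rfl
  have h2 : Polynomial.rootMultiplicity (0:ℂ) (L.charpoly.map Complex.ofRealHom)
      = Polynomial.rootMultiplicity (0:ℝ) L.charpoly := by
    rw [← map_zero Complex.ofRealHom]
    exact (Polynomial.eq_rootMultiplicity_map Complex.ofReal_injective 0).symm
  rw [h1, Matrix.charpoly_map, h2, Polynomial.rootMultiplicity_eq_natTrailingDegree']
  rw [LinearMap.finrank_maxGenEigenspace_zero_eq]
  congr 1
  rw [← LinearMap.charpoly_toMatrix (L.mulVecLin : Module.End ℝ (Fin N → ℝ))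
    (Pi.basisFun ℝ (Fin N))]
  congr 1
  rw [LinearMap.toMatrix_eq_toMatrix', ← Matrix.toLin'_apply', LinearMap.toMatrix'_toLin']

/-- If the graph has a rooted-out branch then the generalized 0-eigenspace is 1-dimensional. -/
lemma gl_finrank_rooted {N : ℕ} (a : Fin N → Fin N → ℝ) (ha : ∀ i j, 0 ≤ a i j) (r : Fin N)
    (hr : ∀ v : Fin N, Relation.ReflTransGen (fun u v => 0 < a v u) r v) :
    Module.finrank ℝ (Module.End.maxGenEigenspace (graphLaplacian a).mulVecLin 0) = 1 := by
  set φ : Module.End ℝ (Fin N → ℝ) := (graphLaplacian a).mulVecLin with hφ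
  have hone : ((fun _ => 1 : Fin N → ℝ)) ≠ 0 := by
    intro h; exact one_ne_zero (congrFun h r)
  have hker : LinearMap.ker φ = Submodule.span ℝ {(fun _ => 1 : Fin N → ℝ)} := by
    apply le_antisymm
    · intro x hx
      have hx' : (graphLaplacian a).mulVec x = 0 := hx
      rw [gl_ker_const a ha r hr x hx']
      exact Submodule.mem_span_singleton.mpr ⟨x r, by funext v; simp⟩
    · rw [Submodule.span_le, Set.singleton_subset_iff]
      exact gl_mulVec_one a
  have hN : 0 < N := r.pos
  have hker2 : ∀ x, φ (φ x) = 0 → φ x = 0 := by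
    intro x hxx
    have hmem : φ x ∈ LinearMap.ker φ := hxx
    rw [hker, Submodule.mem_span_singleton] at hmem
    obtain ⟨c, hc⟩ := hmem
    by_cases hc0 : c = 0
    · rw [← hc, hc0, zero_smul]
    · exfalso
      refine gl_no_const a ha hN x c hc0 ?_
      have h3 : (graphLaplacian a).mulVec x = φ x := rfl
      rw [h3, ← hc]
      funext v; simp
  have hpow : ∀ k (x : Fin N → ℝ), (φ ^ (k+1)) x = 0 → φ x = 0 := by
    intro k
    induction k with
    | zero => intro x h; rwa [pow_one] at h
    | succ k ih =>
      intro x h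
      rw [pow_succ, Module.End.mul_apply] at h
      exact hker2 x (ih (φ x) h)
  have hmax : Module.End.maxGenEigenspace φ 0 = LinearMap.ker φ := by
    ext x
    rw [Module.End.mem_maxGenEigenspace]
    simp only [zero_smul, sub_zero, LinearMap.mem_ker]
    constructor
    · rintro ⟨k, hk⟩
      cases k with
      | zero => rw [pow_zero, Module.End.one_apply] at hk; rw [hk, map_zero]
      | succ k => exact hpow k x hk
    · intro h; exact ⟨1, by rwa [pow_one]⟩
  rw [hmax, hker]
  exact finrank_span_singleton hone

/-- If there is no rooted-out branch, there are two disjoint nonempty predecessor-closed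
vertex sets. -/
lemma gl_closed_sets {N : ℕ} (a : Fin N → Fin N → ℝ) (hN : 0 < N)
    (hnr : ¬ hasRootedOutBranch a) :
    ∃ S₁ S₂ : Finset (Fin N), S₁.Nonempty ∧ S₂.Nonempty ∧ Disjoint S₁ S₂ ∧
      (∀ v ∈ S₁, ∀ u, 0 < a v u → u ∈ S₁) ∧ (∀ v ∈ S₂, ∀ u, 0 < a v u → u ∈ S₂) := by
  classical
  set step : Fin N → Fin N → Prop := fun u v => 0 < a v u with hstep
  set A : Fin N → Finset (Fin N) :=
    fun w => Finset.univ.filter (fun u => Relation.ReflTransGen step u w) with hA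
  have hA_mem : ∀ w u, u ∈ A w ↔ Relation.ReflTransGen step u w := by
    intro w u; simp [hA]
  have hA_closed : ∀ w, ∀ v ∈ A w, ∀ u, 0 < a v u → u ∈ A w := by
    intro w v hv u hu
    rw [hA_mem] at hv ⊢
    exact Relation.ReflTransGen.head hu hv
  have hA_self : ∀ w, w ∈ A w := fun w => (hA_mem w w).mpr Relation.ReflTransGen.refl
  have hanc_sub : ∀ (S : Finset (Fin N)), (∀ v ∈ S, ∀ u, 0 < a v u → u ∈ S) →
      ∀ u ∈ S, A u ⊆ S := by
    intro S hS u hu u' hu'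
    rw [hA_mem] at hu'
    refine Relation.ReflTransGen.head_induction_on hu' hu ?_
    intro s c hsc hcu ih
    exact hS c ih s hsc
  set C : Finset (Finset (Fin N)) :=
    Finset.univ.filter (fun S => S.Nonempty ∧ ∀ v ∈ S, ∀ u, 0 < a v u → u ∈ S) with hC
  have hCuniv : (Finset.univ : Finset (Fin N)) ∈ C := by
    rw [hC, Finset.mem_filter]
    exact ⟨Finset.mem_univ _, ⟨⟨0, hN⟩, Finset.mem_univ _⟩, fun v _ u _ => Finset.mem_univ u⟩
  obtain ⟨S₁, hS₁C, hS₁min⟩ := Finset.exists_min_image C Finset.card ⟨_, hCuniv⟩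
  rw [hC, Finset.mem_filter] at hS₁C
  obtain ⟨-, hS₁ne, hS₁cl⟩ := hS₁C
  obtain ⟨r0, hr0⟩ := hS₁ne
  rw [hasRootedOutBranch] at hnr
  push_neg at hnr
  obtain ⟨w, hw⟩ := hnr r0
  refine ⟨S₁, A w, ⟨r0, hr0⟩, ⟨w, hA_self w⟩, ?_, hS₁cl, hA_closed w⟩
  rw [Finset.disjoint_left]
  intro u huS₁ huAw
  have hsub : A u ⊆ S₁ := hanc_sub S₁ hS₁cl u huS₁
  have hAuC : A u ∈ C := by
    rw [hC, Finset.mem_filter]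
    exact ⟨Finset.mem_univ _, ⟨u, hA_self u⟩, hA_closed u⟩
  have hequ : A u = S₁ := Finset.eq_of_subset_of_card_le hsub (hS₁min _ hAuC)
  have hr0u : Relation.ReflTransGen step r0 u := (hA_mem u r0).mp (hequ ▸ hr0)
  have huw : Relation.ReflTransGen step u w := (hA_mem w u).mp huAw
  exact hw (hr0u.trans huw)

/-- The sum-of-coordinates linear form. -/
def sumForm (N : ℕ) : (Fin N → ℝ) →ₗ[ℝ] ℝ where
  toFun v := ∑ j, v j
  map_add' u v := by simp [Finset.sum_add_distrib]
  map_smul' c v := by simp [Finset.mul_sum]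

/-- Two disjoint nonempty predecessor-closed sets force a kernel of dimension at least two. -/
lemma gl_ker_big {N : ℕ} (a : Fin N → Fin N → ℝ) (ha : ∀ i j, 0 ≤ a i j)
    (S₁ S₂ : Finset (Fin N)) (h₁ : S₁.Nonempty) (h₂ : S₂.Nonempty) (hd : Disjoint S₁ S₂)
    (hc₁ : ∀ v ∈ S₁, ∀ u, 0 < a v u → u ∈ S₁) (hc₂ : ∀ v ∈ S₂, ∀ u, 0 < a v u → u ∈ S₂) :
    2 ≤ Module.finrank ℝ (LinearMap.ker (graphLaplacian a).mulVecLin) := by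
  classical
  set L := graphLaplacian a with hLdef
  have hrow0 : ∀ i, ∑ j, L i j = 0 := by
    intro i
    have := congrFun (gl_mulVec_one a) i
    rw [Matrix.mulVec] at this
    simp only [dotProduct, mul_one] at this
    simpa using this
  have hsupp : ∀ (S : Finset (Fin N)), (∀ v ∈ S, ∀ u, 0 < a v u → u ∈ S) →
      ∀ i ∈ S, ∀ j ∉ S, L i j = 0 := by
    intro S hS i hi j hj
    have hij : i ≠ j := fun h => hj (h ▸ hi)
    have h5 : L i j = -(a i j) := by simp [hLdef, graphLaplacian, hij]
    rw [h5, neg_eq_zero]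
    rcases (ha i j).eq_or_lt with h | h
    · exact h.symm
    · exact absurd (hS i hi j h) hj
  set P : Finset (Fin N) → Submodule ℝ (Fin N → ℝ) :=
    fun S => Submodule.span ℝ ((S.image fun j => Pi.single j (1:ℝ) : Finset _) : Set _) with hP
  set U : Finset (Fin N) → Submodule ℝ (Fin N → ℝ) :=
    fun S => P S ⊓ LinearMap.ker (sumForm N) with hU
  set X : Submodule ℝ (Fin N → ℝ) :=
    Submodule.span ℝ ((((Finset.univ \ (S₁ ∪ S₂)).image fun i => (L i : Fin N → ℝ)) :
      Finset _) : Set _) with hX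
  have hmemP : ∀ (S : Finset (Fin N)) (v : Fin N → ℝ), (∀ j ∉ S, v j = 0) → v ∈ P S := by
    intro S v hv
    have hrepr : v = ∑ j ∈ S, v j • (Pi.single j (1:ℝ) : Fin N → ℝ) := by
      funext k
      rw [Finset.sum_apply]
      by_cases hk : k ∈ S
      · rw [Finset.sum_eq_single k]
        · simp
        · intro j _ hjk
          simp [Pi.single_apply, hjk]
        · intro h; exact absurd hk h
      · rw [hv k hk]
        symm
        apply Finset.sum_eq_zero
        intro j hj
        have : j ≠ k := fun h => hk (h ▸ hj)
        simp [Pi.single_apply, this]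
    rw [hrepr]
    exact Submodule.sum_mem _ fun j hj => Submodule.smul_mem _ _
      (Submodule.subset_span (by simp only [Finset.coe_image]; exact Set.mem_image_of_mem _ hj))
  have hrowU : ∀ (S : Finset (Fin N)), (∀ v ∈ S, ∀ u, 0 < a v u → u ∈ S) →
      ∀ i ∈ S, (L i : Fin N → ℝ) ∈ U S := by
    intro S hS i hi
    refine Submodule.mem_inf.mpr ⟨hmemP S _ (fun j hj => hsupp S hS i hi j hj), ?_⟩
    exact LinearMap.mem_ker.mpr (hrow0 i)
  have hspan : Submodule.span ℝ (Set.range (L : Fin N → Fin N → ℝ)) ≤ U S₁ ⊔ U S₂ ⊔ X := by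
    rw [Submodule.span_le]
    rintro _ ⟨i, rfl⟩
    by_cases hi1 : i ∈ S₁
    · exact Submodule.mem_sup_left (Submodule.mem_sup_left (hrowU S₁ hc₁ i hi1))
    by_cases hi2 : i ∈ S₂
    · exact Submodule.mem_sup_left (Submodule.mem_sup_right (hrowU S₂ hc₂ i hi2))
    · refine Submodule.mem_sup_right (Submodule.subset_span ?_)
      simp only [Finset.coe_image]
      exact Set.mem_image_of_mem _ (by simp [hi1, hi2])
  have hUfin : ∀ (S : Finset (Fin N)), S.Nonempty → Module.finrank ℝ (U S) < S.card := by
    intro S hSne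
    have hUP : U S ≤ P S := inf_le_left
    have hind : (∑ j ∈ S, (Pi.single j (1:ℝ) : Fin N → ℝ)) ∈ P S :=
      Submodule.sum_mem _ fun j hj => Submodule.subset_span
        (by simp only [Finset.coe_image]; exact Set.mem_image_of_mem _ hj)
    have hindsum : sumForm N (∑ j ∈ S, (Pi.single j (1:ℝ) : Fin N → ℝ)) = S.card := by
      rw [map_sum]
      have h6 : ∀ j, sumForm N (Pi.single j (1:ℝ) : Fin N → ℝ) = 1 := by
        intro j
        show ∑ k, (Pi.single j (1:ℝ) : Fin N → ℝ) k = 1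
        simp [Pi.single_apply]
      rw [Finset.sum_congr rfl fun j _ => h6 j]
      simp
    have hne : U S ≠ P S := by
      intro h
      have hmem : (∑ j ∈ S, (Pi.single j (1:ℝ) : Fin N → ℝ)) ∈ U S := h ▸ hind
      have h2 := (Submodule.mem_inf.mp hmem).2
      rw [LinearMap.mem_ker, hindsum] at h2
      exact (Nat.cast_ne_zero.mpr hSne.card_pos.ne') h2
    have hlt : U S < P S := lt_of_le_of_ne hUP hne
    have h3 : Module.finrank ℝ (U S) < Module.finrank ℝ (P S) :=
      Submodule.finrank_lt_finrank_of_lt hlt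
    have h4 : Module.finrank ℝ (P S) ≤ S.card := by
      calc Module.finrank ℝ (P S) ≤ (S.image fun j => Pi.single j (1:ℝ)).card :=
            finrank_span_finset_le_card _
        _ ≤ S.card := Finset.card_image_le
    omega
  have hXfin : Module.finrank ℝ X ≤ (Finset.univ \ (S₁ ∪ S₂)).card := by
    calc Module.finrank ℝ X ≤ ((Finset.univ \ (S₁ ∪ S₂)).image fun i => (L i : Fin N → ℝ)).card :=
          finrank_span_finset_le_card _
      _ ≤ _ := Finset.card_image_le
  have hrank : L.rank = Module.finrank ℝ (Submodule.span ℝ (Set.range (L : Fin N → Fin N → ℝ))) :=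
    Matrix.rank_eq_finrank_span_row L
  have hrank2 : L.rank ≤ Module.finrank ℝ (U S₁) + Module.finrank ℝ (U S₂)
      + Module.finrank ℝ X := by
    rw [hrank]
    calc Module.finrank ℝ (Submodule.span ℝ (Set.range (L : Fin N → Fin N → ℝ)))
        ≤ Module.finrank ℝ ↥(U S₁ ⊔ U S₂ ⊔ X) := Submodule.finrank_mono hspan
      _ ≤ Module.finrank ℝ ↥(U S₁ ⊔ U S₂) + Module.finrank ℝ X :=
          Submodule.finrank_add_le_finrank_add_finrank _ _
      _ ≤ Module.finrank ℝ (U S₁) + Module.finrank ℝ (U S₂) + Module.finrank ℝ X := by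
          have := Submodule.finrank_add_le_finrank_add_finrank (U S₁) (U S₂)
          omega
  have hrn : L.rank + Module.finrank ℝ (LinearMap.ker L.mulVecLin) = N := by
    have := LinearMap.finrank_range_add_finrank_ker L.mulVecLin
    rwa [Module.finrank_fin_fun] at this
  have hcard : (Finset.univ \ (S₁ ∪ S₂)).card + S₁.card + S₂.card = N := by
    rw [Finset.card_sdiff_of_subset (Finset.subset_univ _), Finset.card_union_of_disjoint hd]
    have h5 : S₁.card + S₂.card ≤ N := by
      rw [← Finset.card_union_of_disjoint hd]
      simpa using Finset.card_le_univ (S₁ ∪ S₂)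
    simp only [Finset.card_univ, Fintype.card_fin]
    omega
  have hu1 := hUfin S₁ h₁
  have hu2 := hUfin S₂ h₂
  omega

/-- every eigenvalue of the Laplacian `L` has strictly positive real part except
for a simple zero eigenvalue with corresponding eigenvector `(1,…,1)ᵀ`, if and only if the
graph has a rooted-out branch. -/
theorem laplacian_spectrum_iff_rootedOutBranch
    (N : ℕ) (a : Fin N → Fin N → ℝ) (ha : ∀ i j, 0 ≤ a i j)
    (L : Matrix (Fin N) (Fin N) ℝ) (hL : L = graphLaplacian a) :
    ((∀ μ : ℂ, (L.map (Complex.ofReal)).charpoly.IsRoot μ → μ = 0 ∨ 0 < μ.re) ∧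
      (L.map (Complex.ofReal)).charpoly.rootMultiplicity 0 = 1 ∧
      L.mulVec (fun _ => 1) = 0)
    ↔ hasRootedOutBranch a := by
  subst hL
  constructor
  · rintro ⟨-, h2, -⟩
    rw [gl_bridge] at h2
    by_contra hnr
    have hN : 0 < N := by
      by_contra hN0
      have hle := Submodule.finrank_le
        (Module.End.maxGenEigenspace (graphLaplacian a).mulVecLin 0)
      rw [Module.finrank_fin_fun] at hle
      omega
    obtain ⟨S₁, S₂, h₁, h₂, hd, hc₁, hc₂⟩ := gl_closed_sets a hN hnr
    have hker := gl_ker_big a ha S₁ S₂ h₁ h₂ hd hc₁ hc₂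
    have hkerle : LinearMap.ker (graphLaplacian a).mulVecLin
        ≤ Module.End.maxGenEigenspace (graphLaplacian a).mulVecLin 0 := by
      intro x hx
      rw [Module.End.mem_maxGenEigenspace]
      exact ⟨1, by simpa [zero_smul, sub_zero, pow_one] using LinearMap.mem_ker.mp hx⟩
    have hmono := Submodule.finrank_mono hkerle
    omega
  · rintro ⟨r, hr⟩
    refine ⟨fun μ hμ => gl_root_re a ha μ hμ, ?_, gl_mulVec_one a⟩
    rw [gl_bridge]
    exact gl_finrank_rooted a ha r hr
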